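/- Suppose G⁻(λ) ≥ ρ. Then for every q ∈ [0, M] the worst-case regret admits the following closed form: if q < λ, then Regret(q) = C_G(q) − C_G(q⋆_G); and if q ≥ λ, then Regret(q) = b·(q⋆_G − q) + (b+h)·( (q − λ) + E_G[(λ − D)·1{D < λ}] − E_G[(q⋆_G − D)·1{D ≤ q⋆_G}] ). -/

import Mathlib

open MeasureTheory Set

/-- Newsvendor cost of ordering quantity `q` under demand distribution `F`,
with underage cost `b` and overage cost `h`. -/
noncomputable def nvCost (b h : ℝ) (F : Measure ℝ) (q : ℝ) : ℝ :=
  ∫ x, (b * max (x - q) 0 + h * max (q - x) 0) ∂F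

/-- Optimal newsvendor quantity: the `ρ`-th quantile of `F`. -/
noncomputable def qStar (ρ : ℝ) (F : Measure ℝ) : ℝ :=
  sInf {q : ℝ | ρ ≤ (F (Iic q)).toReal}

/-- The set `𝒢` of admissible demand distributions: Borel probability measures on ℝ
supported on `[0, ∞)` with finite mean and optimal newsvendor quantity at most `M`. -/
def GoodDist (ρ M : ℝ) : Set (Measure ℝ) :=
  {F | IsProbabilityMeasure F ∧ F (Iio 0) = 0 ∧ Integrable id F ∧ qStar ρ F ≤ M}

/-- The ambiguity set `𝒜_λ`: all admissible distributions agreeing with `G` before `lam`. -/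
def Ambig (ρ M : ℝ) (G : Measure ℝ) (lam : ℝ) : Set (Measure ℝ) :=
  {F | F ∈ GoodDist ρ M ∧ ∀ x < lam, F (Iic x) = G (Iic x)}

/-- Worst-case regret of an ordering quantity `q` over the ambiguity set. -/
noncomputable def Regret (b h ρ M : ℝ) (G : Measure ℝ) (lam q : ℝ) : ℝ :=
  sSup ((fun F => nvCost b h F q - nvCost b h F (qStar ρ F)) '' Ambig ρ M G lam)

/-- Minimax risk `Δ`. -/
noncomputable def Risk (b h ρ M : ℝ) (G : Measure ℝ) (lam : ℝ) : ℝ :=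
  sInf (Regret b h ρ M G lam '' Icc 0 M)

/-- The unidentifiable ordering quantity `q†_G`. -/
noncomputable def qDagger (b h M : ℝ) (G : Measure ℝ) (lam : ℝ) : ℝ :=
  (b * M + h * lam - (b + h) * (G (Iio lam)).toReal * M) /
    ((b + h) * (1 - (G (Iio lam)).toReal))

/-- The two-point-tail distribution `F_p`: agrees with `G` on `[0, λ)`, places an atom
of mass `p` at `λ` and an atom of mass `1 - p - G⁻(λ)` at `M`. -/
noncomputable def Fp (G : Measure ℝ) (lam M p : ℝ) : Measure ℝ :=
  G.restrict (Iio lam) + ENNReal.ofReal p • Measure.dirac lam +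
    ENNReal.ofReal (1 - p - (G (Iio lam)).toReal) • Measure.dirac M

/-- The `N`-fold product (i.i.d.) measure of `G` (equal to `Measure.pi` whenever `G`
is sigma-finite, in particular for probability measures). -/
noncomputable def iidPi (N : ℕ) (G : Measure ℝ) : Measure (Fin N → ℝ) := by
  classical
  exact if h : SigmaFinite G then
    haveI := h
    Measure.pi fun _ => G
  else 0
namespace NVaux6


lemma nv_max_decomp (x q : ℝ) : max (x - q) 0 = (x - q) + max (q - x) 0 := by
  rcases le_total q x with hx | hx
  · rw [max_eq_left (by linarith), max_eq_right (by linarith)]; ring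
  · rw [max_eq_right (by linarith), max_eq_left (by linarith)]; ring

lemma nv_integrable_pos (F : Measure ℝ) [IsFiniteMeasure F] (hI : Integrable id F) (q : ℝ) :
    Integrable (fun x => max (q - x) 0) F :=
  ((integrable_const q).sub hI).pos_part

lemma nv_Iio_eq_iUnion (lam : ℝ) : Iio lam = ⋃ n : ℕ, Iic (lam - ((n : ℝ) + 1)⁻¹) := by
  ext x
  simp only [mem_Iio, mem_iUnion, mem_Iic]
  constructor
  · intro hx
    obtain ⟨n, hn⟩ := exists_nat_gt (lam - x)⁻¹
    have h0 : 0 < lam - x := by linarith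
    have h1 : (0:ℝ) < (n : ℝ) + 1 := by positivity
    have h2 : (lam - x)⁻¹ < (n : ℝ) + 1 := by linarith
    have h3 : ((n : ℝ) + 1)⁻¹ < lam - x := by
      rw [inv_lt_comm₀ h1 h0]
      exact h2
    exact ⟨n, by linarith⟩
  · rintro ⟨n, hn⟩
    have h1 : (0:ℝ) < ((n : ℝ) + 1)⁻¹ := by positivity
    linarith

lemma nv_measure_Iio_eq (F G : Measure ℝ) (lam : ℝ)
    (hFG : ∀ x < lam, F (Iic x) = G (Iic x)) : F (Iio lam) = G (Iio lam) := by
  have hm : Monotone (fun n : ℕ => Iic (lam - ((n : ℝ) + 1)⁻¹)) := by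
    intro m n hmn
    apply Iic_subset_Iic.2
    have h1 : ((n : ℝ) + 1)⁻¹ ≤ ((m : ℝ) + 1)⁻¹ := by
      apply inv_anti₀ (by positivity)
      have : (m : ℝ) ≤ (n : ℝ) := Nat.cast_le.2 hmn
      linarith
    linarith
  rw [nv_Iio_eq_iUnion, hm.directed_le.measure_iUnion, hm.directed_le.measure_iUnion]
  exact iSup_congr fun n => hFG _ (by
    have : (0:ℝ) < ((n : ℝ) + 1)⁻¹ := by positivity
    linarith)

lemma nv_restrict_eq (F G : Measure ℝ) [IsFiniteMeasure F] (lam : ℝ)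
    (hFG : ∀ x < lam, F (Iic x) = G (Iic x)) :
    F.restrict (Iio lam) = G.restrict (Iio lam) := by
  refine Measure.ext_of_Iic _ _ (fun a => ?_)
  rw [Measure.restrict_apply measurableSet_Iic, Measure.restrict_apply measurableSet_Iic]
  rcases lt_or_ge a lam with hal | hal
  · have h1 : Iic a ∩ Iio lam = Iic a :=
      inter_eq_left.2 (fun x hx => lt_of_le_of_lt hx hal)
    rw [h1]; exact hFG a hal
  · have h1 : Iic a ∩ Iio lam = Iio lam :=
      inter_eq_right.2 (fun x hx => le_trans (le_of_lt hx) hal)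
    rw [h1]; exact nv_measure_Iio_eq F G lam hFG

lemma nv_bddBelow (ρ : ℝ) (F : Measure ℝ) (hρ : 0 < ρ) (hF0 : F (Iio 0) = 0) :
    ∀ z ∈ {q : ℝ | ρ ≤ (F (Iic q)).toReal}, (0:ℝ) ≤ z := by
  intro z hz
  by_contra hzneg
  push_neg at hzneg
  have h1 : F (Iic z) = 0 :=
    measure_mono_null (fun x hx => lt_of_le_of_lt hx hzneg) hF0
  rw [mem_setOf_eq, h1] at hz
  simp at hz
  linarith

lemma nv_sInf_inter (S : Set ℝ) (lam : ℝ) (hbdd : BddBelow S) (hlam : lam ∈ S) :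
    sInf S = sInf (S ∩ Iic lam) := by
  apply le_antisymm
  · exact csInf_le_csInf hbdd ⟨lam, hlam, le_refl lam⟩ inter_subset_left
  · apply le_csInf ⟨lam, hlam⟩
    intro z hz
    rcases le_total z lam with hzl | hzl
    · exact csInf_le (hbdd.mono inter_subset_left) ⟨hz, hzl⟩
    · exact le_trans (csInf_le (hbdd.mono inter_subset_left) ⟨hlam, le_refl lam⟩) hzl



lemma nv_qStar_eq (ρ lam : ℝ) (F G : Measure ℝ) [IsProbabilityMeasure F]
    [IsProbabilityMeasure G] (hρpos : 0 < ρ)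
    (hF0 : F (Iio 0) = 0) (hG0 : G (Iio 0) = 0)
    (hFG : ∀ x < lam, F (Iic x) = G (Iic x))
    (hcen : ρ ≤ (G (Iio lam)).toReal) :
    qStar ρ F = qStar ρ G := by
  set S := {q : ℝ | ρ ≤ (F (Iic q)).toReal} with hS
  set T := {q : ℝ | ρ ≤ (G (Iic q)).toReal} with hT
  have hbS : BddBelow S := ⟨0, nv_bddBelow ρ F hρpos hF0⟩
  have hbT : BddBelow T := ⟨0, nv_bddBelow ρ G hρpos hG0⟩
  have hIio : F (Iio lam) = G (Iio lam) := nv_measure_Iio_eq F G lam hFG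
  have hlamT : lam ∈ T := by
    refine hcen.trans (ENNReal.toReal_mono (measure_ne_top G _)
      (measure_mono Iio_subset_Iic_self))
  have hlamS : lam ∈ S := by
    have : ρ ≤ (F (Iio lam)).toReal := by rw [hIio]; exact hcen
    exact this.trans (ENNReal.toReal_mono (measure_ne_top F _)
      (measure_mono Iio_subset_Iic_self))
  have hST : S ∩ Iic lam = T ∩ Iic lam := by
    ext z
    constructor
    · rintro ⟨hz, hzl⟩
      rcases lt_or_eq_of_le (mem_Iic.1 hzl) with hzl' | rfl
      · exact ⟨by rwa [hT, mem_setOf_eq, ← hFG z hzl'], hzl⟩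
      · exact ⟨hlamT, mem_Iic.2 le_rfl⟩
    · rintro ⟨hz, hzl⟩
      rcases lt_or_eq_of_le (mem_Iic.1 hzl) with hzl' | rfl
      · exact ⟨by rwa [hS, mem_setOf_eq, hFG z hzl'], hzl⟩
      · exact ⟨hlamS, mem_Iic.2 le_rfl⟩
  rw [qStar, qStar, ← hS, ← hT, nv_sInf_inter S lam hbS hlamS,
    nv_sInf_inter T lam hbT hlamT, hST]

lemma nv_qStar_le_lam (ρ lam : ℝ) (G : Measure ℝ) [IsProbabilityMeasure G]
    (hρpos : 0 < ρ) (hG0 : G (Iio 0) = 0)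
    (hcen : ρ ≤ (G (Iio lam)).toReal) : qStar ρ G ≤ lam := by
  have hlamT : ρ ≤ (G (Iic lam)).toReal :=
    hcen.trans (ENNReal.toReal_mono (measure_ne_top G _)
      (measure_mono Iio_subset_Iic_self))
  exact csInf_le ⟨0, nv_bddBelow ρ G hρpos hG0⟩ hlamT

lemma nvCost_eq (b h : ℝ) (F : Measure ℝ) [IsProbabilityMeasure F]
    (hI : Integrable id F) (q : ℝ) :
    nvCost b h F q = b * (∫ x, x ∂F) - b * q + (b + h) * ∫ x, max (q - x) 0 ∂F := by
  have hpos := nv_integrable_pos F hI q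
  have hid : Integrable (fun x : ℝ => x) F := hI
  have h1 : Integrable (fun x : ℝ => b * (x - q)) F :=
    (hid.sub (integrable_const q)).const_mul b
  have h2 : Integrable (fun x : ℝ => (b + h) * max (q - x) 0) F := hpos.const_mul _
  have hpt : ∀ x : ℝ, b * max (x - q) 0 + h * max (q - x) 0
      = b * (x - q) + (b + h) * max (q - x) 0 := by
    intro x; rw [nv_max_decomp]; ring
  rw [nvCost]
  calc ∫ x, (b * max (x - q) 0 + h * max (q - x) 0) ∂F
      = ∫ x, (b * (x - q) + (b + h) * max (q - x) 0) ∂F :=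
        integral_congr_ae (Filter.Eventually.of_forall hpt)
    _ = (∫ x, b * (x - q) ∂F) + ∫ x, (b + h) * max (q - x) 0 ∂F := integral_add h1 h2
    _ = b * (∫ x, x ∂F) - b * q + (b + h) * ∫ x, max (q - x) 0 ∂F := by
        rw [integral_const_mul, integral_const_mul,
          integral_sub hid (integrable_const q), integral_const]
        simp [measure_univ]
        ring

lemma nv_int_eq_Iio (lam t : ℝ) (ht : t ≤ lam) (μ : Measure ℝ) [IsFiniteMeasure μ]
    (hI : Integrable id μ) :
    ∫ x, max (t - x) 0 ∂μ = ∫ x in Iio lam, max (t - x) 0 ∂μ := by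
  have h0 : ∫ x in (Iio lam)ᶜ, max (t - x) 0 ∂μ = 0 := by
    apply setIntegral_eq_zero_of_forall_eq_zero
    intro x hx
    simp only [compl_Iio, mem_Ici] at hx
    exact max_eq_right (by linarith)
  have := integral_add_compl (measurableSet_Iio (a := lam)) (nv_integrable_pos μ hI t)
  rw [h0, add_zero] at this
  exact this.symm

lemma nv_m_eq (F G : Measure ℝ) [IsFiniteMeasure F] [IsFiniteMeasure G] (lam t : ℝ)
    (ht : t ≤ lam) (hFG : ∀ x < lam, F (Iic x) = G (Iic x))
    (hIF : Integrable id F) (hIG : Integrable id G) :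
    ∫ x, max (t - x) 0 ∂F = ∫ x, max (t - x) 0 ∂G := by
  rw [nv_int_eq_Iio lam t ht F hIF, nv_int_eq_Iio lam t ht G hIG]
  have hres : F.restrict (Iio lam) = G.restrict (Iio lam) := nv_restrict_eq F G lam hFG
  rw [show (∫ x in Iio lam, max (t - x) 0 ∂F) = ∫ x in Iio lam, max (t - x) 0 ∂G from by
    rw [hres]]

end NVaux6
/-- closed form for the worst-case regret in the identifiable
regime `G⁻(λ) ≥ ρ`. -/
theorem stmt6 (b h M lam ρ : ℝ) (hb : 0 < b) (hh : 0 < h) (hM : 0 < M)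
    (hlam : 0 ≤ lam) (hρ : ρ = b / (b + h))
    (G : Measure ℝ) (hG : G ∈ GoodDist ρ M)
    (hcen : ρ ≤ (G (Iio lam)).toReal)
    (q : ℝ) (hq : q ∈ Icc (0 : ℝ) M) :
    (q < lam →
      Regret b h ρ M G lam q = nvCost b h G q - nvCost b h G (qStar ρ G)) ∧
    (lam ≤ q →
      Regret b h ρ M G lam q =
        b * (qStar ρ G - q) + (b + h) *
          ((q - lam) + (∫ x in Iio lam, (lam - x) ∂G)
            - ∫ x in Iic (qStar ρ G), (qStar ρ G - x) ∂G)) := by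
  obtain ⟨hGprob, hG0, hGint, hGq⟩ := hG
  haveI := hGprob
  have hbh : (0:ℝ) < b + h := by linarith
  have hρpos : 0 < ρ := by rw [hρ]; positivity
  have hsl : qStar ρ G ≤ lam := NVaux6.nv_qStar_le_lam ρ lam G hρpos hG0 hcen
  have hGA : G ∈ Ambig ρ M G lam := ⟨⟨hGprob, hG0, hGint, hGq⟩, fun x _ => rfl⟩
  have hval : ∀ F ∈ Ambig ρ M G lam,
      nvCost b h F q - nvCost b h F (qStar ρ F)
        = (b + h) * ((∫ x, max (q - x) 0 ∂F)
            - ∫ x, max (qStar ρ G - x) 0 ∂G) - b * (q - qStar ρ G) := by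
    rintro F ⟨⟨hFprob, hF0, hFint, hFq⟩, hFG⟩
    haveI := hFprob
    have hqs : qStar ρ F = qStar ρ G :=
      NVaux6.nv_qStar_eq ρ lam F G hρpos hF0 hG0 hFG hcen
    rw [NVaux6.nvCost_eq b h F hFint q, hqs, NVaux6.nvCost_eq b h F hFint (qStar ρ G),
      NVaux6.nv_m_eq F G lam (qStar ρ G) hsl hFG hFint hGint]
    ring
  constructor
  · -- identifiable side: q < lam
    intro hql
    have hconst : ∀ F ∈ Ambig ρ M G lam,
        nvCost b h F q - nvCost b h F (qStar ρ F)
          = nvCost b h G q - nvCost b h G (qStar ρ G) := by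
      rintro F hF
      obtain ⟨⟨hFprob, hF0, hFint, hFq⟩, hFG⟩ := hF
      haveI := hFprob
      rw [hval F ⟨⟨hFprob, hF0, hFint, hFq⟩, hFG⟩, hval G hGA,
        NVaux6.nv_m_eq F G lam q (le_of_lt hql) hFG hFint hGint]
    have himg : (fun F => nvCost b h F q - nvCost b h F (qStar ρ F)) '' Ambig ρ M G lam
        = {nvCost b h G q - nvCost b h G (qStar ρ G)} := by
      apply Subset.antisymm
      · rintro y ⟨F, hF, rfl⟩
        exact mem_singleton_iff.2 (hconst F hF)
      · rintro y hy
        rw [mem_singleton_iff] at hy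
        exact ⟨G, hGA, hy.symm⟩
    rw [Regret, himg, csSup_singleton]
  · -- boundary side: lam ≤ q
    intro hql
    -- the B identity
    have hB : ∫ x, max (qStar ρ G - x) 0 ∂G
        = ∫ x in Iic (qStar ρ G), (qStar ρ G - x) ∂G := by
      have h0 : ∫ x in (Iic (qStar ρ G))ᶜ, max (qStar ρ G - x) 0 ∂G = 0 := by
        apply setIntegral_eq_zero_of_forall_eq_zero
        intro x hx
        simp only [compl_Iic, mem_Ioi] at hx
        exact max_eq_right (by linarith)
      have h1 := integral_add_compl (measurableSet_Iic (a := qStar ρ G))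
        (NVaux6.nv_integrable_pos G hGint (qStar ρ G))
      rw [h0, add_zero] at h1
      rw [← h1]
      apply setIntegral_congr_fun measurableSet_Iic
      intro x hx
      rw [mem_Iic] at hx
      exact max_eq_left (by linarith)
    -- splitting the integral of the q-overage over Iio lam under G
    have hsplitG : ∫ x in Iio lam, max (q - x) 0 ∂G
        = (∫ x in Iio lam, (lam - x) ∂G) + (q - lam) * (G (Iio lam)).toReal := by
      have hint1 : Integrable (fun x : ℝ => lam - x) G := (integrable_const lam).sub hGint
      have heq : ∫ x in Iio lam, max (q - x) 0 ∂G
          = ∫ x in Iio lam, ((lam - x) + (q - lam)) ∂G := by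
        apply setIntegral_congr_fun measurableSet_Iio
        intro x hx
        rw [mem_Iio] at hx
        show max (q - x) 0 = (lam - x) + (q - lam)
        rw [max_eq_left (by linarith)]; ring
      rw [heq, integral_add hint1.integrableOn (integrable_const (q - lam)).integrableOn,
        setIntegral_const, smul_eq_mul, measureReal_def]
      ring
    -- uniform upper bound on the overage integral over the ambiguity set
    have hup : ∀ F ∈ Ambig ρ M G lam,
        ∫ x, max (q - x) 0 ∂F
          ≤ (∫ x in Iio lam, (lam - x) ∂G) + (q - lam) := by
      rintro F ⟨⟨hFprob, hF0, hFint, hFq⟩, hFG⟩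
      haveI := hFprob
      have hres : F.restrict (Iio lam) = G.restrict (Iio lam) :=
        NVaux6.nv_restrict_eq F G lam hFG
      have hsplit := integral_add_compl (measurableSet_Iio (a := lam))
        (NVaux6.nv_integrable_pos F hFint q)
      have h1 : ∫ x in Iio lam, max (q - x) 0 ∂F
          = (∫ x in Iio lam, (lam - x) ∂G) + (q - lam) * (G (Iio lam)).toReal := by
        rw [hres, hsplitG]
      have hFI : (F (Ici lam)).toReal = 1 - (G (Iio lam)).toReal := by
        have hc := measure_compl (measurableSet_Iio (a := lam)) (measure_ne_top F _)
        rw [compl_Iio] at hc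
        rw [hc, measure_univ, NVaux6.nv_measure_Iio_eq F G lam hFG,
          ENNReal.toReal_sub_of_le prob_le_one (by simp)]
        simp
      have h2 : ∫ x in (Iio lam)ᶜ, max (q - x) 0 ∂F
          ≤ (q - lam) * (1 - (G (Iio lam)).toReal) := by
        rw [compl_Iio]
        calc ∫ x in Ici lam, max (q - x) 0 ∂F
            ≤ ∫ _x in Ici lam, (q - lam) ∂F := by
              apply setIntegral_mono_on
                ((NVaux6.nv_integrable_pos F hFint q).integrableOn)
                (integrable_const (q - lam)).integrableOn measurableSet_Ici
              intro x hx
              rw [mem_Ici] at hx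
              exact max_le (by linarith) (by linarith)
          _ = (q - lam) * (1 - (G (Iio lam)).toReal) := by
              rw [setIntegral_const, smul_eq_mul, measureReal_def, hFI]; ring
      have hg1 : (G (Iio lam)).toReal ≤ 1 := by
        have hle : G (Iio lam) ≤ 1 := prob_le_one
        have := ENNReal.toReal_mono (by simp) hle
        simpa using this
      nlinarith [hsplit, h1, h2]
    -- the extremal distribution F0
    have hg0 : (0:ℝ) ≤ (G (Iio lam)).toReal := ENNReal.toReal_nonneg
    have hg1 : (G (Iio lam)).toReal ≤ 1 := by
      have hle : G (Iio lam) ≤ 1 := prob_le_one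
      have := ENNReal.toReal_mono (by simp) hle
      simpa using this
    have hp0 : (0:ℝ) ≤ 1 - (G (Iio lam)).toReal := by linarith
    have hdiracInt : Integrable id (Measure.dirac lam) :=
      (integrable_const lam).congr (ae_eq_dirac (id : ℝ → ℝ)).symm
    have hdiracPos : Integrable (fun x => max (q - x) 0) (Measure.dirac lam) :=
      (integrable_const (max (q - lam) 0)).congr
        (ae_eq_dirac (fun x => max (q - x) 0)).symm
    have hmass : (G.restrict (Iio lam)
        + ENNReal.ofReal (1 - (G (Iio lam)).toReal) • Measure.dirac lam) univ = 1 := by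
      rw [Measure.add_apply, Measure.smul_apply, Measure.restrict_apply MeasurableSet.univ,
        univ_inter, Measure.dirac_apply' _ MeasurableSet.univ]
      simp only [indicator_of_mem (mem_univ lam), Pi.one_apply, smul_eq_mul, mul_one]
      rw [ENNReal.ofReal_sub _ hg0, ENNReal.ofReal_one,
        ENNReal.ofReal_toReal (measure_ne_top G _), add_tsub_cancel_of_le prob_le_one]
    haveI hF0prob : IsProbabilityMeasure (G.restrict (Iio lam)
        + ENNReal.ofReal (1 - (G (Iio lam)).toReal) • Measure.dirac lam) := ⟨hmass⟩
    have hF0null : (G.restrict (Iio lam)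
        + ENNReal.ofReal (1 - (G (Iio lam)).toReal) • Measure.dirac lam) (Iio 0) = 0 := by
      rw [Measure.add_apply, Measure.smul_apply, Measure.restrict_apply measurableSet_Iio,
        Measure.dirac_apply' _ measurableSet_Iio]
      have h1 : G (Iio 0 ∩ Iio lam) = 0 := measure_mono_null inter_subset_left hG0
      have h2 : lam ∉ Iio 0 := by simp; linarith
      rw [h1, indicator_of_notMem h2]
      simp
    have hF0FG : ∀ x < lam, (G.restrict (Iio lam)
        + ENNReal.ofReal (1 - (G (Iio lam)).toReal) • Measure.dirac lam) (Iic x)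
          = G (Iic x) := by
      intro x hx
      have h1 : Iic x ∩ Iio lam = Iic x :=
        inter_eq_left.2 (fun y hy => lt_of_le_of_lt (mem_Iic.1 hy) hx)
      have h2 : lam ∉ Iic x := by simp; linarith
      rw [Measure.add_apply, Measure.smul_apply, Measure.restrict_apply measurableSet_Iic,
        Measure.dirac_apply' _ measurableSet_Iic, h1, indicator_of_notMem h2]
      simp
    have hF0int : Integrable id (G.restrict (Iio lam)
        + ENNReal.ofReal (1 - (G (Iio lam)).toReal) • Measure.dirac lam) :=
      Integrable.add_measure (hGint.integrableOn)
        (hdiracInt.smul_measure ENNReal.ofReal_ne_top)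
    have hqsF0 : qStar ρ (G.restrict (Iio lam)
        + ENNReal.ofReal (1 - (G (Iio lam)).toReal) • Measure.dirac lam) = qStar ρ G :=
      NVaux6.nv_qStar_eq ρ lam _ G hρpos hF0null hG0 hF0FG hcen
    have hF0A : (G.restrict (Iio lam)
        + ENNReal.ofReal (1 - (G (Iio lam)).toReal) • Measure.dirac lam)
          ∈ Ambig ρ M G lam :=
      ⟨⟨hF0prob, hF0null, hF0int, by rw [hqsF0]; exact hGq⟩, hF0FG⟩
    have hmF0 : ∫ x, max (q - x) 0 ∂(G.restrict (Iio lam)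
        + ENNReal.ofReal (1 - (G (Iio lam)).toReal) • Measure.dirac lam)
          = (∫ x in Iio lam, (lam - x) ∂G) + (q - lam) := by
      rw [integral_add_measure ((NVaux6.nv_integrable_pos G hGint q).integrableOn)
        (hdiracPos.smul_measure ENNReal.ofReal_ne_top),
        hsplitG, integral_smul_measure, integral_dirac, ENNReal.toReal_ofReal hp0,
        smul_eq_mul, max_eq_left (by linarith : (0:ℝ) ≤ q - lam)]
      ring
    have hvF0 : nvCost b h (G.restrict (Iio lam)
          + ENNReal.ofReal (1 - (G (Iio lam)).toReal) • Measure.dirac lam) q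
        - nvCost b h (G.restrict (Iio lam)
          + ENNReal.ofReal (1 - (G (Iio lam)).toReal) • Measure.dirac lam)
            (qStar ρ (G.restrict (Iio lam)
              + ENNReal.ofReal (1 - (G (Iio lam)).toReal) • Measure.dirac lam))
        = b * (qStar ρ G - q) + (b + h) *
            ((q - lam) + (∫ x in Iio lam, (lam - x) ∂G)
              - ∫ x in Iic (qStar ρ G), (qStar ρ G - x) ∂G) := by
      rw [hval _ hF0A, hmF0, hB]
      ring
    rw [Regret]
    apply IsGreatest.csSup_eq
    constructor
    · exact ⟨_, hF0A, hvF0⟩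
    · rintro y ⟨F, hF, rfl⟩
      show nvCost b h F q - nvCost b h F (qStar ρ F) ≤ _
      rw [hval F hF, hB]
      have h1 := hup F hF
      have h2 := mul_le_mul_of_nonneg_left h1 hbh.le
      nlinarith [h2]
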